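/- Let n and t be natural numbers with 1 ≤ t ≤ n, set β := t/n, and define the Rent-or-Buy cost function f : ℕ → ℝ by f(c) = c/t for 0 ≤ c ≤ t and f(c) = 1 for c > t. Then for every greedy cover φ' of a set cover instance on a ground set of size n and every cover φ of the same instance, ∑_i f(c'_i) ≤ (1 − ln β) · ∑_i f(c_i), where c'_i and c_i are the part sizes of φ' and φ. In other words, the greedy algorithm approximates the Rent-or-Buy set cover problem within a factor of 1 − ln β. -/

import Mathlib

open Finset

/-- A set cover instance: a collection of subsets of a finite ground set `V` whose union is `V`. -/
structure SetCoverInstance (V : Type*) [Fintype V] [DecidableEq V] where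
  sets : Finset (Finset V)
  covers : ∀ v : V, ∃ S ∈ sets, v ∈ S

/-- A cover: an assignment of each element to a subset of the collection containing it. -/
structure Cover {V : Type*} [Fintype V] [DecidableEq V] (I : SetCoverInstance V) where
  φ : V → Finset V
  mem_sets : ∀ v, φ v ∈ I.sets
  self_mem : ∀ v, v ∈ φ v

variable {V : Type*} [Fintype V] [DecidableEq V] {I : SetCoverInstance V}

/-- `a_v`: the size of the part containing `v`. -/
def Cover.a (c : Cover I) (v : V) : ℕ :=
  (Finset.univ.filter fun w => c.φ w = c.φ v).card

/-- `c_i`: the size of the part assigned to subset `S`. -/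
def Cover.partSize (c : Cover I) (S : Finset V) : ℕ :=
  (Finset.univ.filter fun w => c.φ w = S).card

/-- A greedy cover: its parts can be ordered `P 0, …, P (m-1)` so that each `P j` is obtained by
choosing a subset covering a maximum number of yet-uncovered elements. -/
def Cover.IsGreedy (c : Cover I) : Prop :=
  ∃ (m : ℕ) (P : ℕ → Finset V),
    (∀ v : V, ∃ j < m, v ∈ P j) ∧
    (∀ j < m, ∃ S ∈ I.sets,
      P j = S \ (Finset.range j).biUnion P ∧
      ∀ T ∈ I.sets, (T \ (Finset.range j).biUnion P).card ≤ (P j).card) ∧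
    (∀ j < m, ∀ v ∈ P j, (Finset.univ.filter fun w => c.φ w = c.φ v) = P j)

/-- The generalized `p`-mean of the part sizes `a_v`, over the elements. -/
noncomputable def Cover.pMean (c : Cover I) (p : ℝ) : ℝ :=
  ((1 / (Fintype.card V : ℝ)) * ∑ v : V, (c.a v : ℝ) ^ p) ^ (1 / p)

lemma harmonic_le_log (t n : ℕ) (ht : 1 ≤ t) (htn : t ≤ n) :
    ∑ i ∈ Finset.Ioc t n, (1 / (i : ℝ)) ≤ Real.log n - Real.log t := by
  induction n, htn using Nat.le_induction with
  | base => simp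
  | succ n hn ih =>
    rw [Finset.sum_Ioc_succ_top hn]
    have h1 : (1:ℝ) ≤ (n:ℝ) := by exact_mod_cast ht.trans hn
    have hn0 : (0:ℝ) < (n:ℝ) := by linarith
    have hn1 : (0:ℝ) < (n:ℝ) + 1 := by linarith
    have key : (1:ℝ)/((n:ℝ)+1) ≤ Real.log ((n:ℝ)+1) - Real.log n := by
      have h2 := Real.log_le_sub_one_of_pos (x := (n:ℝ)/((n:ℝ)+1)) (by positivity)
      rw [Real.log_div (ne_of_gt hn0) (ne_of_gt hn1)] at h2
      have heq : (n:ℝ)/((n:ℝ)+1) - 1 = -(1/((n:ℝ)+1)) := by field_simp; ring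
      linarith [heq ▸ h2]
    push_cast
    linarith [ih]

lemma stage_sum_le (h : ℕ → ℝ) (hh0 : ∀ i, 0 ≤ h i)
    (hmono : ∀ i j : ℕ, 1 ≤ i → i ≤ j → h j ≤ h i)
    (m : ℕ) (p N : ℕ → ℕ) (hN : ∀ j < m, N j = N (j + 1) + p j) :
    ∀ d : ℕ, ∑ j ∈ Finset.Ico (m - d) m, (p j : ℝ) * h (N j) ≤
      ∑ i ∈ Finset.Ioc 0 (N (m - d)), h i := by
  intro d
  induction d with
  | zero => simpa using Finset.sum_nonneg fun i _ => hh0 i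
  | succ d ih =>
    by_cases hd : m ≤ d
    · have he : m - (d+1) = m - d := by omega
      rw [he]; exact ih
    · push_neg at hd
      have hk1 : m - d = (m - (d+1)) + 1 := by omega
      set k := m - (d+1) with hk
      have hkm : k < m := by omega
      rw [Finset.sum_eq_sum_Ico_succ_bot hkm]
      rw [hk1] at ih
      have hNk : N k = N (k+1) + p k := hN k hkm
      have hsplit : ∑ i ∈ Finset.Ioc 0 (N (k+1)), h i + ∑ i ∈ Finset.Ioc (N (k+1)) (N k), h i
          = ∑ i ∈ Finset.Ioc 0 (N k), h i :=
        Finset.sum_Ioc_consecutive _ (Nat.zero_le _) (by omega)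
      have hblock : (p k : ℝ) * h (N k) ≤ ∑ i ∈ Finset.Ioc (N (k+1)) (N k), h i := by
        have hcard : (Finset.Ioc (N (k+1)) (N k)).card = p k := by
          rw [Nat.card_Ioc]; omega
        have hle := Finset.card_nsmul_le_sum (Finset.Ioc (N (k+1)) (N k)) h (h (N k))
          (fun i hi => by
            simp only [Finset.mem_Ioc] at hi
            exact hmono i (N k) (by omega) hi.2)
        rw [hcard] at hle
        simpa [nsmul_eq_mul] using hle
      linarith [ih]

/-- with the Rent-or-Buy cost function with breakpoint `t = βn`, every greedy
cover `c'` and every cover `c` on a ground set of size `n` satisfy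
`∑ f(c'_i) ≤ (1 - ln β) · ∑ f(c_i)`. -/
theorem greedy_rentOrBuy_approx (t : ℕ) (ht : 1 ≤ t) (htn : t ≤ Fintype.card V)
    (β : ℝ) (hβ : β = (t : ℝ) / (Fintype.card V : ℝ))
    (f : ℕ → ℝ) (hf : ∀ m : ℕ, f m = if m ≤ t then (m : ℝ) / t else 1)
    (c' : Cover I) (hc' : c'.IsGreedy) (c : Cover I) :
    ∑ S ∈ I.sets, f (c'.partSize S) ≤
      (1 - Real.log β) * ∑ S ∈ I.sets, f (c.partSize S) := by
  classical
  obtain ⟨m, P, hcov, hgreedy, hfib⟩ := hc'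
  set n := Fintype.card V with hn
  have hn1 : 1 ≤ n := le_trans ht htn
  set C := ∑ S ∈ I.sets, f (c.partSize S) with hC
  have ht0 : (0:ℝ) < (t:ℝ) := by exact_mod_cast ht
  have hn0 : (0:ℝ) < (n:ℝ) := by exact_mod_cast hn1
  have hf_nonneg : ∀ s : ℕ, 0 ≤ f s := by
    intro s; rw [hf]; split
    · positivity
    · norm_num
  -- sum of part sizes of any cover is n
  have hsum_parts : ∑ S ∈ I.sets, (c.partSize S : ℝ) = (n : ℝ) := by
    have := Finset.card_eq_sum_card_fiberwise (f := c.φ) (s := Finset.univ) (t := I.sets)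
      (fun v _ => c.mem_sets v)
    rw [Finset.card_univ] at this
    rw [hn]
    exact_mod_cast this.symm
  have hpart_le_n : ∀ S, (c.partSize S : ℝ) ≤ (n : ℝ) := by
    intro S
    have : c.partSize S ≤ n := by
      have := Finset.card_filter_le (Finset.univ : Finset V) (fun w => c.φ w = S)
      simpa [Cover.partSize, Finset.card_univ, ← hn] using this
    exact_mod_cast this
  have hC1 : (1:ℝ) ≤ C := by
    have hterm : ∀ S ∈ I.sets, (c.partSize S : ℝ) / n ≤ f (c.partSize S) := by
      intro S _
      rw [hf]; split
      · rename_i hle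
        apply div_le_div_of_nonneg_left _ ht0 _
        · positivity
        · exact_mod_cast htn
      · rw [div_le_one hn0]; exact hpart_le_n S
    calc (1:ℝ) = (∑ S ∈ I.sets, (c.partSize S : ℝ)) / n := by
          rw [hsum_parts]; field_simp
      _ = ∑ S ∈ I.sets, (c.partSize S : ℝ) / n := by rw [Finset.sum_div]
      _ ≤ C := Finset.sum_le_sum hterm
  have hC0 : (0:ℝ) < C := lt_of_lt_of_le one_pos hC1
  -- uncovered sets
  set Unc : ℕ → Finset V := fun j => Finset.univ \ (Finset.range j).biUnion P with hUnc
  set N : ℕ → ℕ := fun j => (Unc j).card with hNdef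
  have hPsub : ∀ j < m, P j ⊆ Unc j := by
    intro j hj
    obtain ⟨S₀, _, hPj, _⟩ := hgreedy j hj
    rw [hPj, hUnc]
    exact Finset.sdiff_subset_sdiff (Finset.subset_univ _) le_rfl
  have hNrec : ∀ j < m, N j = N (j + 1) + (P j).card := by
    intro j hj
    have hstep : Unc (j+1) = Unc j \ P j := by
      rw [hUnc]
      simp only [Finset.range_add_one, Finset.biUnion_insert, Finset.sdiff_sdiff_left']
      rw [Finset.sdiff_union_distrib]
      ext v; simp [and_comm]
    have := Finset.card_sdiff_add_card_eq_card (hPsub j hj)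
    rw [hNdef]
    simp only [hstep]
    omega
  -- per-stage bound: N j ≤ C * max (|P j|) t
  have hstage : ∀ j, j < m → (N j : ℝ) ≤ C * max ((P j).card : ℝ) (t : ℝ) := by
    intro j hj
    obtain ⟨S₀, hS₀, hPj, hmax⟩ := hgreedy j hj
    have hfibcount : (N j : ℕ) = ∑ S' ∈ I.sets, ((Unc j).filter fun w => c.φ w = S').card :=
      Finset.card_eq_sum_card_fiberwise (fun v _ => c.mem_sets v)
    have hterm : ∀ S' ∈ I.sets,
        ((((Unc j).filter fun w => c.φ w = S').card : ℝ)) ≤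
          max ((P j).card : ℝ) (t : ℝ) * f (c.partSize S') := by
      intro S' hS'
      set q := ((Unc j).filter fun w => c.φ w = S').card with hq
      have hq1 : q ≤ (P j).card := by
        refine le_trans (Finset.card_le_card ?_) (hmax S' hS')
        intro v hv
        simp only [Finset.mem_filter, hUnc, Finset.mem_sdiff] at hv
        rw [Finset.mem_sdiff]
        refine ⟨?_, hv.1.2⟩
        rw [← hv.2]; exact c.self_mem v
      have hq2 : q ≤ c.partSize S' := by
        apply Finset.card_le_card
        apply Finset.filter_subset_filter
        exact Finset.subset_univ _
      rw [hf]; split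
      · rename_i hle
        have h1 : (q : ℝ) ≤ (c.partSize S' : ℝ) := by exact_mod_cast hq2
        have h2 : (t:ℝ) * ((c.partSize S' : ℝ) / t) = (c.partSize S' : ℝ) := by field_simp
        have h3 : (t:ℝ) * ((c.partSize S' : ℝ) / t) ≤
            max ((P j).card : ℝ) (t : ℝ) * ((c.partSize S' : ℝ) / t) := by
          apply mul_le_mul_of_nonneg_right (le_max_right _ _)
          positivity
        linarith
      · have h1 : (q : ℝ) ≤ ((P j).card : ℝ) := by exact_mod_cast hq1
        have h2 : ((P j).card : ℝ) ≤ max ((P j).card : ℝ) (t : ℝ) := le_max_left _ _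
        linarith
    calc (N j : ℝ) = ∑ S' ∈ I.sets, ((((Unc j).filter fun w => c.φ w = S').card : ℝ)) := by
          exact_mod_cast hfibcount
      _ ≤ ∑ S' ∈ I.sets, max ((P j).card : ℝ) (t : ℝ) * f (c.partSize S') :=
          Finset.sum_le_sum hterm
      _ = max ((P j).card : ℝ) (t : ℝ) * C := by rw [← Finset.mul_sum]
      _ = C * max ((P j).card : ℝ) (t : ℝ) := mul_comm _ _
  -- the cost function h
  set h : ℕ → ℝ := fun i => min (1/(t:ℝ)) (C / i) with hh
  have hh0 : ∀ i, 0 ≤ h i := by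
    intro i
    apply le_min
    · positivity
    · apply div_nonneg hC0.le (Nat.cast_nonneg i)
  have hhmono : ∀ i j : ℕ, 1 ≤ i → i ≤ j → h j ≤ h i := by
    intro i j hi hij
    apply min_le_min le_rfl
    apply div_le_div_of_nonneg_left hC0.le
    · exact_mod_cast hi
    · exact_mod_cast hij
  -- greedy cost as sum over elements
  have hG1 : ∑ S ∈ I.sets, f (c'.partSize S) =
      ∑ v : V, f (c'.a v) / (c'.a v : ℝ) := by
    rw [← Finset.sum_fiberwise_of_maps_to (g := c'.φ) (fun v _ => c'.mem_sets v)
        (fun v => f (c'.a v) / (c'.a v : ℝ))]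
    apply Finset.sum_congr rfl
    intro S hS
    have hterm : ∀ v ∈ Finset.univ.filter (fun w => c'.φ w = S),
        f (c'.a v) / (c'.a v : ℝ) = f (c'.partSize S) / (c'.partSize S : ℝ) := by
      intro v hv
      simp only [Finset.mem_filter] at hv
      have : c'.a v = c'.partSize S := by
        unfold Cover.a Cover.partSize
        rw [hv.2]
      rw [this]
    rw [Finset.sum_congr rfl hterm, Finset.sum_const]
    have hcard : (Finset.univ.filter fun w => c'.φ w = S).card = c'.partSize S := rfl
    rw [hcard, nsmul_eq_mul]
    by_cases h0 : c'.partSize S = 0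
    · simp [h0, hf 0]
    · have : (c'.partSize S : ℝ) ≠ 0 := Nat.cast_ne_zero.2 h0
      field_simp
  -- partition of univ into the P j
  have huniv : (Finset.univ : Finset V) = (Finset.range m).biUnion P := by
    apply Finset.Subset.antisymm
    · intro v _
      obtain ⟨j, hj, hv⟩ := hcov v
      exact Finset.mem_biUnion.2 ⟨j, Finset.mem_range.2 hj, hv⟩
    · exact Finset.subset_univ _
  have hdisj : (↑(Finset.range m) : Set ℕ).PairwiseDisjoint P := by
    intro j hj j' hj' hne
    simp only [Finset.coe_range, Set.mem_Iio] at hj hj'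
    have key : ∀ a b, a < b → b < m → Disjoint (P a) (P b) := by
      intro a b hab hbm
      obtain ⟨S₀, _, hPb, _⟩ := hgreedy b hbm
      rw [hPb]
      apply Disjoint.mono_left (Finset.subset_biUnion_of_mem P (Finset.mem_range.2 hab))
      exact Finset.sdiff_disjoint.symm
    rcases lt_or_gt_of_ne hne with hlt | hgt
    · exact key j j' hlt hj'
    · exact (key j' j hgt hj).symm
  -- per-stage sum bound
  have hstagesum : ∀ j ∈ Finset.range m,
      ∑ v ∈ P j, f (c'.a v) / (c'.a v : ℝ) ≤ ((P j).card : ℝ) * h (N j) := by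
    intro j hjr
    have hj : j < m := Finset.mem_range.1 hjr
    have haj : ∀ v ∈ P j, c'.a v = (P j).card := by
      intro v hv
      unfold Cover.a
      rw [hfib j hj v hv]
    by_cases hp0 : (P j).card = 0
    · rw [Finset.card_eq_zero.1 hp0]
      simp
    · have hp1 : 1 ≤ (P j).card := Nat.one_le_iff_ne_zero.2 hp0
      have hN1 : 1 ≤ N j := le_trans hp1 (Finset.card_le_card (hPsub j hj))
      have hNpos : (0:ℝ) < (N j : ℝ) := by exact_mod_cast hN1
      set pj := (P j).card with hpj
      have hppos : (0:ℝ) < (pj : ℝ) := by exact_mod_cast hp1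
      have hval : f pj / (pj : ℝ) ≤ h (N j) := by
        have hA : f pj / (pj : ℝ) = 1 / max ((pj:ℝ)) ((t:ℝ)) := by
          rw [hf]; split
          · rename_i hle
            have hmx : max ((pj:ℝ)) ((t:ℝ)) = (t:ℝ) := max_eq_right (by exact_mod_cast hle)
            rw [hmx]
            rw [div_right_comm, div_self (ne_of_gt hppos)]
          · rename_i hgt
            push_neg at hgt
            have hmx : max ((pj:ℝ)) ((t:ℝ)) = (pj:ℝ) := max_eq_left (by
              exact_mod_cast hgt.le)
            rw [hmx]
        rw [hA, hh]
        apply le_min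
        · apply one_div_le_one_div_of_le ht0 (le_max_right _ _)
        · rw [div_le_div_iff₀ (lt_of_lt_of_le ht0 (le_max_right _ _)) hNpos]
          have := hstage j hj
          nlinarith [this]
      calc ∑ v ∈ P j, f (c'.a v) / (c'.a v : ℝ)
          = ∑ v ∈ P j, f pj / (pj : ℝ) := by
            apply Finset.sum_congr rfl
            intro v hv
            rw [haj v hv]
        _ = (pj : ℝ) * (f pj / (pj : ℝ)) := by
            rw [Finset.sum_const, nsmul_eq_mul]
        _ ≤ (pj : ℝ) * h (N j) := by
            apply mul_le_mul_of_nonneg_left hval hppos.le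
  -- N 0 = n
  have hN0 : N 0 = n := by
    rw [hNdef]
    simp [hUnc, ← hn]
  -- assemble
  have hmain : ∑ S ∈ I.sets, f (c'.partSize S) ≤ ∑ i ∈ Finset.Ioc 0 n, h i := by
    calc ∑ S ∈ I.sets, f (c'.partSize S)
        = ∑ v : V, f (c'.a v) / (c'.a v : ℝ) := hG1
      _ = ∑ j ∈ Finset.range m, ∑ v ∈ P j, f (c'.a v) / (c'.a v : ℝ) := by
          rw [huniv, Finset.sum_biUnion hdisj]
      _ ≤ ∑ j ∈ Finset.range m, ((P j).card : ℝ) * h (N j) :=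
          Finset.sum_le_sum hstagesum
      _ ≤ ∑ i ∈ Finset.Ioc 0 (N 0), h i := by
          have := stage_sum_le h hh0 hhmono m (fun j => (P j).card) N hNrec m
          rwa [Nat.sub_self, ← Finset.range_eq_Ico] at this
      _ = ∑ i ∈ Finset.Ioc 0 n, h i := by rw [hN0]
  -- final bound
  have hfinal : ∑ i ∈ Finset.Ioc 0 n, h i ≤ (1 - Real.log β) * C := by
    have hsplit : ∑ i ∈ Finset.Ioc 0 t, h i + ∑ i ∈ Finset.Ioc t n, h i
        = ∑ i ∈ Finset.Ioc 0 n, h i :=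
      Finset.sum_Ioc_consecutive _ (Nat.zero_le _) htn
    have h1 : ∑ i ∈ Finset.Ioc 0 t, h i ≤ 1 := by
      calc ∑ i ∈ Finset.Ioc 0 t, h i ≤ ∑ i ∈ Finset.Ioc 0 t, 1/(t:ℝ) :=
            Finset.sum_le_sum fun i _ => min_le_left _ _
        _ = (t : ℝ) * (1/(t:ℝ)) := by
            rw [Finset.sum_const, Nat.card_Ioc, Nat.sub_zero, nsmul_eq_mul]
        _ = 1 := by field_simp
    have h2 : ∑ i ∈ Finset.Ioc t n, h i ≤ C * (Real.log n - Real.log t) := by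
      calc ∑ i ∈ Finset.Ioc t n, h i ≤ ∑ i ∈ Finset.Ioc t n, C * (1/(i:ℝ)) := by
            apply Finset.sum_le_sum
            intro i _
            rw [mul_one_div]
            exact min_le_right _ _
        _ = C * ∑ i ∈ Finset.Ioc t n, (1/(i:ℝ)) := by rw [Finset.mul_sum]
        _ ≤ C * (Real.log n - Real.log t) := by
            apply mul_le_mul_of_nonneg_left (harmonic_le_log t n ht htn) hC0.le
    have hβlog : Real.log β = Real.log t - Real.log n := by
      rw [hβ]
      exact Real.log_div (ne_of_gt ht0) (ne_of_gt hn0)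
    rw [hβlog]
    have hlogmono : Real.log (t:ℝ) ≤ Real.log (n:ℝ) :=
      Real.log_le_log ht0 (by exact_mod_cast htn)
    nlinarith [h1, h2, hsplit, hC1]
  exact le_trans hmain hfinal
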